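/- Local exponential rate of the scalar LQR at the optimum: the local PŁ ratio m(k) = (deriv J(k))² / (J(k) − J(k*)) has a positive limit at the optimal gain; precisely, m(k* + ε) → 2r/√(a² + q/r) as ε → 0 with ε ≠ 0. Hence J satisfies a local Polyak–Łojasiewicz inequality near k*. -/

import Mathlib

open Filter

/-- Local exponential rate of the scalar LQR at the optimum: the local PŁ ratio
`m(k* + ε) = (deriv J (k* + ε))² / (J(k* + ε) − J(k*))` tends to `2r/√(a² + q/r)` as
`ε → 0`, `ε ≠ 0`; hence `J` satisfies a local Polyak–Łojasiewicz inequality near `k*`. -/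
theorem scalar_LQR_local_PL_rate
    (a q r : ℝ) (hq : 0 < q) (hr : 0 < r)
    (J : ℝ → ℝ) (hJ : ∀ k : ℝ, J k = (r * k ^ 2 + q) / (2 * (k - a)))
    (kstar : ℝ) (hkstar : kstar = a + Real.sqrt (a ^ 2 + q / r)) :
    Tendsto (fun ε : ℝ => (deriv J (kstar + ε)) ^ 2 / (J (kstar + ε) - J kstar))
        (nhdsWithin 0 {(0 : ℝ)}ᶜ) (nhds (2 * r / Real.sqrt (a ^ 2 + q / r))) ∧
      ∃ δ : ℝ, 0 < δ ∧ ∃ μ : ℝ, 0 < μ ∧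
        ∀ k : ℝ, |k - kstar| < δ → (deriv J k) ^ 2 ≥ μ * (J k - J kstar) := by
  have hpos : 0 < a ^ 2 + q / r := by positivity
  set s := Real.sqrt (a ^ 2 + q / r) with hs_def
  have hs : 0 < s := Real.sqrt_pos.mpr hpos
  have hs2 : s ^ 2 = a ^ 2 + q / r := Real.sq_sqrt hpos.le
  have hq' : r * s ^ 2 = r * a ^ 2 + q := by
    rw [hs2]; field_simp
  have hka0 : kstar - a = s := by rw [hkstar]; ring
  clear_value s
  have hJfun : J = fun k => (r * k ^ 2 + q) / (2 * (k - a)) := funext hJ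
  -- derivative formula
  have hderiv : ∀ k : ℝ, k ≠ a →
      deriv J k = r * (k - kstar) * (k - a + s) / (2 * (k - a) ^ 2) := by
    intro k hk
    have hka : k - a ≠ 0 := sub_ne_zero.mpr hk
    have hden : (2 : ℝ) * (k - a) ≠ 0 := mul_ne_zero two_ne_zero hka
    have h1 : HasDerivAt (fun x : ℝ => (r * x ^ 2 + q) / (2 * (x - a)))
        ((r * (2 * k ^ 1) * (2 * (k - a)) - (r * k ^ 2 + q) * 2) / (2 * (k - a)) ^ 2) k := by
      have hu : HasDerivAt (fun x : ℝ => r * x ^ 2 + q) (r * (2 * k ^ 1)) k :=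
        ((hasDerivAt_pow 2 k).const_mul r).add_const q
      have hv : HasDerivAt (fun x : ℝ => 2 * (x - a)) 2 k := by
        simpa using ((hasDerivAt_id k).sub_const a).const_mul 2
      exact hu.div hv hden
    rw [hJfun, h1.deriv]
    rw [div_eq_div_iff (by positivity) (by positivity)]
    have hkk : k - kstar = (k - a) - s := by rw [← hka0]; ring
    rw [hkk]
    linear_combination (4 * (k - a) ^ 2) * hq'
  -- gap formula
  have hgap : ∀ k : ℝ, k ≠ a →
      J k - J kstar = r * (k - kstar) ^ 2 / (2 * (k - a)) := by
    intro k hk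
    have hka : k - a ≠ 0 := sub_ne_zero.mpr hk
    have hkas : kstar - a ≠ 0 := by rw [hka0]; exact ne_of_gt hs
    rw [hJ k, hJ kstar]
    rw [div_sub_div _ _ (mul_ne_zero two_ne_zero hka) (mul_ne_zero two_ne_zero hkas)]
    rw [div_eq_div_iff (by exact mul_ne_zero (mul_ne_zero two_ne_zero hka) (mul_ne_zero two_ne_zero hkas)) (mul_ne_zero two_ne_zero hka)]
    have hkk : kstar = a + s := by linarith [hka0]
    rw [hkk]
    linear_combination (4 * (k - a) * ((k - a) - s)) * hq'
  constructor
  · -- limit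
    set g : ℝ → ℝ := fun ε => r * (2 * s + ε) ^ 2 / (2 * (s + ε) ^ 3) with hg
    have hcont : ContinuousAt g 0 := by
      apply ContinuousAt.div
      · fun_prop
      · fun_prop
      · simp; positivity
    have hg0 : g 0 = 2 * r / s := by
      simp only [hg]
      rw [div_eq_div_iff (by positivity) (by positivity)]
      ring
    have heq : (fun ε : ℝ => (deriv J (kstar + ε)) ^ 2 / (J (kstar + ε) - J kstar))
        =ᶠ[nhdsWithin 0 {(0 : ℝ)}ᶜ] g := by
      have hmem : {(0 : ℝ)}ᶜ ∩ Metric.ball (0 : ℝ) s ∈ nhdsWithin 0 {(0 : ℝ)}ᶜ :=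
        inter_mem_nhdsWithin _ (Metric.ball_mem_nhds 0 hs)
      filter_upwards [hmem] with ε hε
      obtain ⟨hne, hball⟩ := hε
      have hεne : ε ≠ 0 := hne
      have hεs : |ε| < s := by simpa [Real.dist_eq] using hball
      have hsε : 0 < s + ε := by
        have := (abs_lt.mp hεs).1; linarith
      have hka : kstar + ε - a = s + ε := by rw [← hka0]; ring
      have hkne : kstar + ε ≠ a := by
        intro h; rw [h] at hka; simp at hka; linarith
      rw [hderiv _ hkne, hgap _ hkne, hka]
      have hkk : kstar + ε - kstar = ε := by ring
      rw [hkk]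
      simp only [hg]
      rw [div_eq_div_iff (by positivity) (by positivity)]
      field_simp
      ring
    refine Tendsto.congr' heq.symm ?_
    have := (hcont.tendsto).mono_left (nhdsWithin_le_nhds (s := {(0:ℝ)}ᶜ))
    rwa [hg0] at this
  · -- PL inequality
    refine ⟨s / 2, by positivity, r / (3 * s), by positivity, fun k hk => ?_⟩
    set ε := k - kstar with hε
    clear_value ε
    have hεb := abs_lt.mp hk
    have hka : k - a = s + ε := by rw [hε, ← hka0]; ring
    have hsε : s / 2 < s + ε := by linarith [hεb.1]
    have hsε' : s + ε < 3 * s / 2 := by linarith [hεb.2]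
    have hspos : 0 < s + ε := by linarith
    have hkne : k ≠ a := by
      intro h; rw [h] at hka; simp at hka; linarith
    have hp : 0 < s / 2 - ε := by linarith [hεb.2]
    have hm : 0 < s / 2 + ε := by linarith [hεb.1]
    have h1 : 2 * (s + ε) ^ 3 ≤ 3 * s * (2 * s + ε) ^ 2 := by
      have key : 3 * s * (2 * s + ε) ^ 2 - 2 * (s + ε) ^ 3 =
          (13/2) * (s/2 - ε)^3 + 27 * (s/2 - ε)^2 * (s/2 + ε) +
          (69/2) * (s/2 - ε) * (s/2 + ε)^2 + 12 * (s/2 + ε)^3 := by ring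
      have t1 := pow_pos hp 3
      have t2 := mul_pos (pow_pos hp 2) hm
      have t3 := mul_pos hp (pow_pos hm 2)
      have t4 := pow_pos hm 3
      linarith [key, t1, t2, t3, t4]
    rw [hderiv _ hkne, hgap _ hkne, hka, ← hε]
    rw [ge_iff_le, div_pow, div_mul_div_comm]
    rw [div_le_div_iff₀ (by positivity) (by positivity)]
    nlinarith [mul_le_mul_of_nonneg_left h1 (show (0:ℝ) ≤ 2 * r ^ 2 * ε ^ 2 * (s + ε) by positivity)]
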